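/- With notation as in the previous statement, under the same hypotheses, the leading coefficient (angular component) of the Laurent series f(φ(t)) equals f_{γ(ω)}(P₁(0), …, P_d(0)). -/

import Mathlib

open Finset
open scoped Classical

noncomputable section

namespace ArcAux

variable {K : Type*} [Field K]

lemma leadingCoeff_mul {x y : LaurentSeries K} (hx : x ≠ 0) (hy : y ≠ 0) :
    (x * y).leadingCoeff = x.leadingCoeff * y.leadingCoeff := by
  rw [HahnSeries.leadingCoeff_eq, HahnSeries.order_mul hx hy,
    HahnSeries.coeff_mul_order_add_order]

lemma order_inv {x : LaurentSeries K} (hx : x ≠ 0) : x⁻¹.order = -x.order := by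
  have h := HahnSeries.order_mul hx (inv_ne_zero hx)
  rw [mul_inv_cancel₀ hx, HahnSeries.order_one] at h
  linarith

lemma leadingCoeff_inv {x : LaurentSeries K} (hx : x ≠ 0) :
    x⁻¹.leadingCoeff = x.leadingCoeff⁻¹ := by
  have h := leadingCoeff_mul hx (inv_ne_zero hx)
  rw [mul_inv_cancel₀ hx, HahnSeries.leadingCoeff_one] at h
  exact eq_inv_of_mul_eq_one_right h.symm

lemma order_zpow {x : LaurentSeries K} (hx : x ≠ 0) (n : ℤ) :
    (x ^ n).order = n * x.order := by
  cases n with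
  | ofNat k => rw [Int.ofNat_eq_coe, zpow_natCast, HahnSeries.order_pow]; ring
  | negSucc k =>
      rw [zpow_negSucc, order_inv (pow_ne_zero _ hx), HahnSeries.order_pow,
        Int.negSucc_eq]
      ring

lemma leadingCoeff_pow {x : LaurentSeries K} (hx : x ≠ 0) (k : ℕ) :
    (x ^ k).leadingCoeff = x.leadingCoeff ^ k := by
  induction k with
  | zero => simp [HahnSeries.leadingCoeff_one]
  | succ k ih => rw [pow_succ, pow_succ, leadingCoeff_mul (pow_ne_zero _ hx) hx, ih]

lemma leadingCoeff_zpow {x : LaurentSeries K} (hx : x ≠ 0) (n : ℤ) :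
    (x ^ n).leadingCoeff = x.leadingCoeff ^ n := by
  cases n with
  | ofNat k => rw [Int.ofNat_eq_coe, zpow_natCast, zpow_natCast, leadingCoeff_pow hx]
  | negSucc k =>
      rw [zpow_negSucc, zpow_negSucc, leadingCoeff_inv (pow_ne_zero _ hx),
        leadingCoeff_pow hx]

lemma order_prod {ι : Type*} (s : Finset ι) (f : ι → LaurentSeries K)
    (hf : ∀ i ∈ s, f i ≠ 0) : (∏ i ∈ s, f i).order = ∑ i ∈ s, (f i).order := by
  classical
  induction s using Finset.induction with
  | empty => simp [HahnSeries.order_one]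
  | insert j t hns ih =>
      rw [Finset.prod_insert hns, Finset.sum_insert hns,
        HahnSeries.order_mul (hf j (Finset.mem_insert_self _ _))
          (Finset.prod_ne_zero_iff.mpr fun i hi => hf i (Finset.mem_insert_of_mem hi)),
        ih fun i hi => hf i (Finset.mem_insert_of_mem hi)]

lemma leadingCoeff_prod {ι : Type*} (s : Finset ι) (f : ι → LaurentSeries K)
    (hf : ∀ i ∈ s, f i ≠ 0) :
    (∏ i ∈ s, f i).leadingCoeff = ∏ i ∈ s, (f i).leadingCoeff := by
  classical
  induction s using Finset.induction with
  | empty => simp [HahnSeries.leadingCoeff_one]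
  | insert j t hns ih =>
      rw [Finset.prod_insert hns, Finset.prod_insert hns,
        leadingCoeff_mul (hf j (Finset.mem_insert_self _ _))
          (Finset.prod_ne_zero_iff.mpr fun i hi => hf i (Finset.mem_insert_of_mem hi)),
        ih fun i hi => hf i (Finset.mem_insert_of_mem hi)]

lemma ofPowerSeries_coeff_neg (x : PowerSeries K) {n : ℤ} (hn : n < 0) :
    ((HahnSeries.ofPowerSeries ℤ K) x).coeff n = 0 := by
  rw [HahnSeries.ofPowerSeries_apply]
  apply HahnSeries.embDomain_notin_range
  rintro ⟨k, hk⟩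
  have : (k : ℤ) = n := hk
  omega

lemma ofPowerSeries_coeff_zero (x : PowerSeries K) :
    ((HahnSeries.ofPowerSeries ℤ K) x).coeff 0 = PowerSeries.constantCoeff x := by
  have := HahnSeries.ofPowerSeries_apply_coeff (Γ := ℤ) x 0
  simp only [Nat.cast_zero] at this
  rw [this]
  simp

lemma order_ofPowerSeries (x : PowerSeries K) (hx : PowerSeries.constantCoeff x ≠ 0) :
    ((HahnSeries.ofPowerSeries ℤ K) x).order = 0 := by
  have h0 : ((HahnSeries.ofPowerSeries ℤ K) x).coeff 0 ≠ 0 := by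
    rw [ofPowerSeries_coeff_zero]; exact hx
  have hne : (HahnSeries.ofPowerSeries ℤ K) x ≠ 0 := fun h => h0 (by simp [h])
  refine le_antisymm (HahnSeries.order_le_of_coeff_ne_zero h0) ?_
  by_contra h
  push_neg at h
  exact hne (HahnSeries.coeff_order_eq_zero.mp (ofPowerSeries_coeff_neg x h))

lemma leadingCoeff_ofPowerSeries (x : PowerSeries K)
    (hx : PowerSeries.constantCoeff x ≠ 0) :
    ((HahnSeries.ofPowerSeries ℤ K) x).leadingCoeff = PowerSeries.constantCoeff x := by
  rw [HahnSeries.leadingCoeff_eq, order_ofPowerSeries x hx, ofPowerSeries_coeff_zero]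

end ArcAux

/-- Standard pairing `⟨ω, x⟩ = ∑ i, ω i * x i` on `ℝ^d`. -/
def pairing {d : ℕ} (ω x : Fin d → ℝ) : ℝ := ∑ i, ω i * x i

/-- The Newton polyhedron at infinity: the convex hull of `supp(f) ∪ {0}`. -/
def newtonPolyhedron {d : ℕ} (a : (Fin d → ℤ) →₀ ℂ) : Set (Fin d → ℝ) :=
  convexHull ℝ (((fun α : Fin d → ℤ => fun i => (α i : ℝ)) '' (a.support : Set (Fin d → ℤ))) ∪ {0})

/-- The face Laurent polynomial `f_γ(x) = ∑_{α ∈ γ ∩ supp f} a_α x^α`, evaluated at `x`. -/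
def faceEval {d : ℕ} (a : (Fin d → ℤ) →₀ ℂ) (γ : Set (Fin d → ℝ)) (x : Fin d → ℂ) : ℂ :=
  ∑ α ∈ a.support.filter (fun α => (fun i => (α i : ℝ)) ∈ γ), a α * ∏ i, x i ^ α i

/-- The Laurent series `f(φ(t))` obtained by substituting the Laurent arc
`φ(t) = (P_i(t) · t^{-ω_i})` into the Laurent polynomial `f = ∑ a_α x^α`. -/
def arcSubst {d : ℕ} (a : (Fin d → ℤ) →₀ ℂ) (P : Fin d → PowerSeries ℂ) (ω : Fin d → ℤ) :
    LaurentSeries ℂ :=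
  ∑ α ∈ a.support, (HahnSeries.C (a α)) *
    ∏ i, (((HahnSeries.ofPowerSeries ℤ ℂ) (P i)) * HahnSeries.single (-(ω i)) (1 : ℂ)) ^ α i

/-- Let `φ(t) = (P_i(t)/t^{ω_i})` be a Laurent arc with each `P_i` an invertible power
series, and `f` a Laurent polynomial with Newton polyhedron at infinity `Γ₋ ∋ 0`.
If `m = max_{Γ₋} ⟨ω,·⟩ > 0` and the face polynomial `f_{γ(ω)}` does not vanish at
`(P_1(0),…,P_d(0))`, then the leading coefficient (angular component) of the Laurent series `f(φ(t))`
equals `f_{γ(ω)}(P_1(0),…,P_d(0))`. -/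
theorem arc_leading_coeff_eq_faceEval {d : ℕ} (a : (Fin d → ℤ) →₀ ℂ)
    (P : Fin d → PowerSeries ℂ) (hP : ∀ i, PowerSeries.constantCoeff (P i) ≠ 0)
    (ω : Fin d → ℤ) (m : ℤ) (hpos : 0 < m)
    (hmax : IsGreatest ((fun x => pairing (fun i => (ω i : ℝ)) x) '' newtonPolyhedron a) (m : ℝ))
    (hnd : faceEval a {x ∈ newtonPolyhedron a | pairing (fun i => (ω i : ℝ)) x = (m : ℝ)}
      (fun i => PowerSeries.constantCoeff (P i)) ≠ 0) :
    (arcSubst a P ω).coeff (-m) =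
      faceEval a {x ∈ newtonPolyhedron a | pairing (fun i => (ω i : ℝ)) x = (m : ℝ)}
        (fun i => PowerSeries.constantCoeff (P i)) := by
  classical
  set c : Fin d → ℂ := fun i => PowerSeries.constantCoeff (P i) with hc
  set F : Fin d → LaurentSeries ℂ := fun i =>
    ((HahnSeries.ofPowerSeries ℤ ℂ) (P i)) * HahnSeries.single (-(ω i)) (1 : ℂ) with hFdef
  set S : (Fin d → ℤ) → ℤ := fun α => ∑ i, ω i * α i with hSdef
  have hof : ∀ i, ((HahnSeries.ofPowerSeries ℤ ℂ) (P i)) ≠ 0 := by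
    intro i h
    have : ((HahnSeries.ofPowerSeries ℤ ℂ) (P i)).coeff 0 = 0 := by rw [h]; simp
    rw [ArcAux.ofPowerSeries_coeff_zero] at this
    exact hP i this
  have hFne : ∀ i, F i ≠ 0 := fun i =>
    mul_ne_zero (hof i) (HahnSeries.single_ne_zero one_ne_zero)
  have hFord : ∀ i, (F i).order = -(ω i) := by
    intro i
    rw [hFdef]
    rw [HahnSeries.order_mul (hof i) (HahnSeries.single_ne_zero one_ne_zero),
      ArcAux.order_ofPowerSeries _ (hP i), HahnSeries.order_single one_ne_zero, zero_add]
  have hFlead : ∀ i, (F i).leadingCoeff = c i := by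
    intro i
    rw [hFdef]
    rw [ArcAux.leadingCoeff_mul (hof i) (HahnSeries.single_ne_zero one_ne_zero),
      ArcAux.leadingCoeff_ofPowerSeries _ (hP i), HahnSeries.leadingCoeff_of_single, mul_one]
  have hGne : ∀ α : Fin d → ℤ, (∏ i, F i ^ α i) ≠ 0 := fun α =>
    Finset.prod_ne_zero_iff.mpr fun i _ => zpow_ne_zero _ (hFne i)
  have hGord : ∀ α : Fin d → ℤ, (∏ i, F i ^ α i).order = -S α := by
    intro α
    rw [ArcAux.order_prod _ _ fun i _ => zpow_ne_zero _ (hFne i)]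
    have h1 : ∀ i : Fin d, (F i ^ α i).order = -(ω i * α i) := by
      intro i
      rw [ArcAux.order_zpow (hFne i), hFord i]; ring
    rw [Finset.sum_congr rfl fun i _ => h1 i, hSdef, ← Finset.sum_neg_distrib]
  have hGlead : ∀ α : Fin d → ℤ, (∏ i, F i ^ α i).leadingCoeff = ∏ i, c i ^ α i := by
    intro α
    rw [ArcAux.leadingCoeff_prod _ _ fun i _ => zpow_ne_zero _ (hFne i)]
    exact Finset.prod_congr rfl fun i _ => by
      rw [ArcAux.leadingCoeff_zpow (hFne i), hFlead i]
  -- the support points satisfy `S α ≤ m`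
  have hle : ∀ α ∈ a.support, S α ≤ m := by
    intro α hα
    have hmem : (fun i => (α i : ℝ)) ∈ newtonPolyhedron a :=
      subset_convexHull ℝ _ (Or.inl ⟨α, by simpa using hα, rfl⟩)
    have h2 : pairing (fun i => (ω i : ℝ)) (fun i => (α i : ℝ)) = ((S α : ℤ) : ℝ) := by
      rw [pairing, hSdef]; push_cast; rfl
    have h4 : pairing (fun i => (ω i : ℝ)) (fun i => (α i : ℝ)) ≤ (m : ℝ) :=
      hmax.2 ⟨_, hmem, rfl⟩
    rw [h2] at h4
    exact_mod_cast h4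
  -- the filter condition is equivalent to `S α = m` for support points
  have hfiltereq :
      a.support.filter (fun α => (fun i => (α i : ℝ)) ∈
          {x ∈ newtonPolyhedron a | pairing (fun i => (ω i : ℝ)) x = (m : ℝ)}) =
        a.support.filter (fun α => S α = m) := by
    apply Finset.filter_congr
    intro α hα
    have hmem : (fun i => (α i : ℝ)) ∈ newtonPolyhedron a :=
      subset_convexHull ℝ _ (Or.inl ⟨α, by simpa using hα, rfl⟩)
    have h2 : pairing (fun i => (ω i : ℝ)) (fun i => (α i : ℝ)) = ((S α : ℤ) : ℝ) := by
      rw [pairing, hSdef]; push_cast; rfl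
    simp only [Set.mem_setOf_eq, hmem, true_and, h2]
    exact_mod_cast Iff.rfl
  -- compute the coefficient
  rw [arcSubst]
  show (∑ α ∈ a.support, (HahnSeries.C (a α)) * ∏ i, F i ^ α i).coeff (-m) = _
  have hcoe : (∑ α ∈ a.support, (HahnSeries.C (a α)) * ∏ i, F i ^ α i).coeff (-m) =
      ∑ α ∈ a.support, ((HahnSeries.C (a α)) * ∏ i, F i ^ α i).coeff (-m) :=
    map_sum (HahnSeries.coeff.addMonoidHom (-m)) _ a.support
  rw [hcoe]
  have hterm : ∀ α ∈ a.support,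
      ((HahnSeries.C (a α)) * ∏ i, F i ^ α i).coeff (-m) =
        if S α = m then a α * ∏ i, c i ^ α i else 0 := by
    intro α hα
    have haα : a α ≠ 0 := Finsupp.mem_support_iff.mp hα
    have hCne : (HahnSeries.C (a α) : LaurentSeries ℂ) ≠ 0 := HahnSeries.C_ne_zero haα
    have hord : ((HahnSeries.C (a α)) * ∏ i, F i ^ α i).order = -S α := by
      rw [HahnSeries.order_mul hCne (hGne α), HahnSeries.order_C, hGord α, zero_add]
    by_cases hSm : S α = m
    · rw [if_pos hSm]
      have h3 : (-m : ℤ) = ((HahnSeries.C (a α)) * ∏ i, F i ^ α i).order := by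
        rw [hord, hSm]
      rw [h3, ← HahnSeries.leadingCoeff_eq, ArcAux.leadingCoeff_mul hCne (hGne α),
        hGlead α, HahnSeries.C_apply, HahnSeries.leadingCoeff_of_single]
    · rw [if_neg hSm]
      apply HahnSeries.coeff_eq_zero_of_lt_order
      rw [hord]
      have := lt_of_le_of_ne (hle α hα) hSm
      omega
  rw [Finset.sum_congr rfl hterm, ← Finset.sum_filter, faceEval]
  refine Finset.sum_congr ?_ fun _ _ => rfl
  convert hfiltereq.symm using 2
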